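/- Let k ≥ 4 be an integer. Then the elliptic zeta value obeys the additive three-term relation Z_k(τ,σ) = Z_k(τ, τ+σ) + Z_k(τ+σ, σ) for all τ, σ ∈ H. -/

import Mathlib

open Complex Filter Topology

/-- The open upper half-plane as a subset of `ℂ`. -/
def UHP : Set ℂ := {z : ℂ | 0 < z.im}

/-- `qexp τ = e^{2πiτ}`. -/
noncomputable def qexp (τ : ℂ) : ℂ := Complex.exp (2 * Real.pi * Complex.I * τ)

/-- Elliptic zeta values `Z_k(τ,σ)`. -/
noncomputable def ellipticZeta (k : ℕ) (τ σ : ℂ) : ℂ :=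
  -((2 * (Real.pi : ℂ) * Complex.I) ^ k / (Nat.factorial (k - 1) : ℂ)) *
    ∑' j : ℕ+, (j : ℂ) ^ (k - 1) *
      (qexp τ ^ (j : ℕ) - (-1 : ℂ) ^ k * qexp σ ^ (j : ℕ)) /
      ((1 - qexp τ ^ (j : ℕ)) * (1 - qexp σ ^ (j : ℕ)))

/-- `D_k(q)`: the normalized generating function of sums of `(k-1)`-st powers of divisors. -/
noncomputable def Dk (k : ℕ) (q : ℂ) : ℂ :=
  ((-2 * (Real.pi : ℂ) * Complex.I) ^ k / (Nat.factorial (k - 1) : ℂ)) *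
    ∑' n : ℕ+, (∑ d ∈ Nat.divisors (n : ℕ), (d : ℂ) ^ (k - 1)) * q ^ (n : ℕ)

/-- Ruijsenaars's elliptic gamma function. -/
noncomputable def ellipticGamma (z τ σ : ℂ) : ℂ :=
  ∏' p : ℕ × ℕ,
    (1 - qexp τ ^ (p.1 + 1) * qexp σ ^ (p.2 + 1) * Complex.exp (-(2 * Real.pi * Complex.I) * z)) /
    (1 - qexp τ ^ p.1 * qexp σ ^ p.2 * Complex.exp (2 * Real.pi * Complex.I * z))

/-- The modified theta function `θ₀(z,τ)`. -/
noncomputable def theta0 (z τ : ℂ) : ℂ :=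
  ∏' j : ℕ, (1 - qexp τ ^ (j + 1) * Complex.exp (-(2 * Real.pi * Complex.I) * z)) *
            (1 - qexp τ ^ j * Complex.exp (2 * Real.pi * Complex.I * z))

/-- A modular form of weight `k` for `SL(2,ℤ)`: a holomorphic function on the
upper half-plane transforming with weight `k` under `SL(2,ℤ)` and bounded as `Im τ → ∞`. -/
def IsModularForm (k : ℕ) (G : ℂ → ℂ) : Prop :=
  DifferentiableOn ℂ G UHP ∧
  (∀ A : Matrix.SpecialLinearGroup (Fin 2) ℤ, ∀ τ ∈ UHP,
      G (((A 0 0 : ℤ) * τ + (A 0 1 : ℤ)) / ((A 1 0 : ℤ) * τ + (A 1 1 : ℤ))) =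
        ((A 1 0 : ℤ) * τ + (A 1 1 : ℤ)) ^ k * G τ) ∧
  (∃ C : ℝ, ∀ τ ∈ UHP, 1 ≤ τ.im → ‖G τ‖ ≤ C)

/-- All factors in the defining double product of the elliptic gamma function are nonzero. -/
def EGFactorsNeZero (z τ σ : ℂ) : Prop :=
  ∀ j ℓ : ℕ,
    (1 - qexp τ ^ (j + 1) * qexp σ ^ (ℓ + 1) * Complex.exp (-(2 * Real.pi * Complex.I) * z)) ≠ 0 ∧
    (1 - qexp τ ^ j * qexp σ ^ ℓ * Complex.exp (2 * Real.pi * Complex.I * z)) ≠ 0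

lemma qexp_norm_lt_one {τ : ℂ} (hτ : τ ∈ UHP) : ‖qexp τ‖ < 1 := by
  have hτ' : 0 < τ.im := hτ
  rw [qexp, Complex.norm_exp]
  have hre : (2 * (Real.pi : ℂ) * Complex.I * τ).re = -(2 * Real.pi * τ.im) := by
    simp [Complex.mul_re, Complex.mul_im]
  rw [hre, Real.exp_lt_one_iff]
  have := Real.pi_pos
  nlinarith

lemma norm_one_sub_pow {a : ℂ} (ha : ‖a‖ < 1) (n : ℕ) (hn : 1 ≤ n) :
    1 - ‖a‖ ≤ ‖1 - a ^ n‖ := by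
  have h1 : ‖a ^ n‖ ≤ ‖a‖ := by
    rw [norm_pow]
    exact pow_le_of_le_one (norm_nonneg a) ha.le (by omega)
  calc 1 - ‖a‖ ≤ 1 - ‖a ^ n‖ := by linarith
    _ ≤ ‖1 - a ^ n‖ := by
        have := norm_sub_norm_le (1 : ℂ) (a ^ n)
        simpa using this

lemma one_sub_pow_ne {a : ℂ} (ha : ‖a‖ < 1) (n : ℕ) (hn : 1 ≤ n) :
    (1 : ℂ) - a ^ n ≠ 0 := by
  intro h
  have := norm_one_sub_pow ha n hn
  rw [h, norm_zero] at this
  linarith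

lemma summable_ez (k : ℕ) {a b : ℂ} (ha : ‖a‖ < 1) (hb : ‖b‖ < 1) :
    Summable fun j : ℕ+ => (j : ℂ) ^ (k - 1) *
      (a ^ (j : ℕ) - (-1 : ℂ) ^ k * b ^ (j : ℕ)) /
      ((1 - a ^ (j : ℕ)) * (1 - b ^ (j : ℕ))) := by
  set C : ℝ := ((1 - ‖a‖) * (1 - ‖b‖))⁻¹ with hC
  have hCpos : 0 < (1 - ‖a‖) * (1 - ‖b‖) := by
    have := norm_nonneg a; have := norm_nonneg b
    nlinarith
  have hga : Summable fun n : ℕ => ((n : ℝ) ^ (k - 1) * ‖a‖ ^ n) * C := by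
    apply Summable.mul_right
    simpa using summable_pow_mul_geometric_of_norm_lt_one (k - 1)
      (show ‖‖a‖‖ < 1 by simpa using ha)
  have hgb : Summable fun n : ℕ => ((n : ℝ) ^ (k - 1) * ‖b‖ ^ n) * C := by
    apply Summable.mul_right
    simpa using summable_pow_mul_geometric_of_norm_lt_one (k - 1)
      (show ‖‖b‖‖ < 1 by simpa using hb)
  have hg : Summable fun n : ℕ =>
      ((n : ℝ) ^ (k - 1) * ‖a‖ ^ n) * C + ((n : ℝ) ^ (k - 1) * ‖b‖ ^ n) * C := hga.add hgb
  have hg' : Summable fun j : ℕ+ =>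
      (((j : ℕ) : ℝ) ^ (k - 1) * ‖a‖ ^ (j : ℕ)) * C +
      (((j : ℕ) : ℝ) ^ (k - 1) * ‖b‖ ^ (j : ℕ)) * C :=
    hg.comp_injective PNat.coe_injective
  apply Summable.of_norm_bounded hg'
  intro j
  have h1 : 1 ≤ (j : ℕ) := j.one_le
  have hda := norm_one_sub_pow ha (j : ℕ) h1
  have hdb := norm_one_sub_pow hb (j : ℕ) h1
  rw [norm_div, norm_mul, norm_mul]
  have hnum : ‖a ^ (j : ℕ) - (-1 : ℂ) ^ k * b ^ (j : ℕ)‖ ≤ ‖a‖ ^ (j : ℕ) + ‖b‖ ^ (j : ℕ) := by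
    calc ‖a ^ (j : ℕ) - (-1 : ℂ) ^ k * b ^ (j : ℕ)‖
        ≤ ‖a ^ (j : ℕ)‖ + ‖(-1 : ℂ) ^ k * b ^ (j : ℕ)‖ := norm_sub_le _ _
      _ = ‖a‖ ^ (j : ℕ) + ‖b‖ ^ (j : ℕ) := by
          rw [norm_mul, norm_pow, norm_pow, norm_pow]
          simp
  have hjn : ‖(j : ℂ) ^ (k - 1)‖ = ((j : ℕ) : ℝ) ^ (k - 1) := by
    rw [norm_pow]; norm_cast
  have hden : (1 - ‖a‖) * (1 - ‖b‖) ≤ ‖(1 : ℂ) - a ^ (j : ℕ)‖ * ‖(1 : ℂ) - b ^ (j : ℕ)‖ :=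
    mul_le_mul hda hdb (by linarith [hb]) (norm_nonneg _)
  rw [hjn]
  have hjpos : (0 : ℝ) ≤ ((j : ℕ) : ℝ) ^ (k - 1) := by positivity
  calc ((j : ℕ) : ℝ) ^ (k - 1) * ‖a ^ (j : ℕ) - (-1 : ℂ) ^ k * b ^ (j : ℕ)‖ /
        (‖(1 : ℂ) - a ^ (j : ℕ)‖ * ‖(1 : ℂ) - b ^ (j : ℕ)‖)
      ≤ ((j : ℕ) : ℝ) ^ (k - 1) * (‖a‖ ^ (j : ℕ) + ‖b‖ ^ (j : ℕ)) / ((1 - ‖a‖) * (1 - ‖b‖)) :=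
        div_le_div₀ (by positivity) (mul_le_mul_of_nonneg_left hnum hjpos) hCpos hden
    _ = (((j : ℕ) : ℝ) ^ (k - 1) * ‖a‖ ^ (j : ℕ)) * C +
        (((j : ℕ) : ℝ) ^ (k - 1) * ‖b‖ ^ (j : ℕ)) * C := by
        rw [div_eq_mul_inv, ← hC]; ring

/-- additive three-term relation for `Z_k`, `k ≥ 4`. -/
theorem ellipticZeta_additive_three_term
    (k : ℕ) (hk : 4 ≤ k) (τ σ : ℂ) (hτ : τ ∈ UHP) (hσ : σ ∈ UHP) :
    ellipticZeta k τ σ = ellipticZeta k τ (τ + σ) + ellipticZeta k (τ + σ) σ := by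
  have hts : τ + σ ∈ UHP := by
    have h1 : 0 < τ.im := hτ
    have h2 : 0 < σ.im := hσ
    show 0 < (τ + σ).im
    rw [Complex.add_im]; linarith
  have ha := qexp_norm_lt_one hτ
  have hb := qexp_norm_lt_one hσ
  have hab := qexp_norm_lt_one hts
  have hmul : qexp (τ + σ) = qexp τ * qexp σ := by
    rw [qexp, qexp, qexp, ← Complex.exp_add]
    ring_nf
  unfold ellipticZeta
  rw [← mul_add, ← Summable.tsum_add (summable_ez k ha hab) (summable_ez k hab hb)]
  congr 1
  apply tsum_congr
  intro j
  have h1 : 1 ≤ (j : ℕ) := j.one_le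
  have hq : (1 : ℂ) - qexp τ ^ (j : ℕ) ≠ 0 := one_sub_pow_ne ha _ h1
  have hr : (1 : ℂ) - qexp σ ^ (j : ℕ) ≠ 0 := one_sub_pow_ne hb _ h1
  have hqr : (1 : ℂ) - qexp (τ + σ) ^ (j : ℕ) ≠ 0 := one_sub_pow_ne hab _ h1
  rw [hmul, mul_pow] at hqr ⊢
  field_simp
  ring
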